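/- Let n₁,...,n_m be positive integers, d = Σᵢ nᵢ², sᵢ = Σ_{j<i} nⱼ², and ω = exp(2πi/d). Define U = ⊕ᵢ ω^{sᵢ} I_{nᵢ} ⊗ Dᵢ with Dᵢ = diag(1, ω^{nᵢ}, ω^{2nᵢ}, ..., ω^{(nᵢ-1)nᵢ}), and V = ⊕ᵢ I_{nᵢ} ⊗ Cᵢ with Cᵢ a circulant unitary with eigenvalues 1, ω, ..., ω^{nᵢ-1}. Then for any integer r not divisible by d, tr(U^r V^r) = 0. -/

import Mathlib

open Matrix Kronecker Finset

/-- The `n × n` Fourier (DFT) matrix `(F_n)_{jk} = exp(2πi jk/n)/√n`. -/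
noncomputable def FourierMatrix (n : ℕ) : Matrix (Fin n) (Fin n) ℂ :=
  Matrix.of fun j k =>
    Complex.exp (2 * Real.pi * Complex.I * (j : ℕ) * (k : ℕ) / n) / Real.sqrt n

lemma FourierMatrix_apply (k : ℕ) (hk : k ≠ 0) (j l : Fin k) :
    FourierMatrix k j l = Complex.exp (2 * Real.pi * Complex.I / k) ^ ((j : ℕ) * l) / Real.sqrt k := by
  rw [FourierMatrix, Matrix.of_apply, ← Complex.exp_nat_mul]
  congr 1
  have : (k : ℂ) ≠ 0 := Nat.cast_ne_zero.mpr hk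
  push_cast
  field_simp

lemma fourier_entry_mul_star (k : ℕ) (hk : k ≠ 0) (j l : Fin k) :
    FourierMatrix k j l * star (FourierMatrix k j l) = (k : ℂ)⁻¹ := by
  have hsq : (Real.sqrt k : ℂ) * (Real.sqrt k : ℂ) = (k : ℂ) := by
    rw [← Complex.ofReal_mul, Real.mul_self_sqrt (Nat.cast_nonneg k)]
    simp
  have hk' : (k : ℂ) ≠ 0 := Nat.cast_ne_zero.mpr hk
  rw [FourierMatrix, Matrix.of_apply]
  set z : ℂ := 2 * Real.pi * Complex.I * (j : ℕ) * (l : ℕ) / k with hz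
  have hstar : star (Complex.exp z / (Real.sqrt k : ℂ)) = Complex.exp (-z) / (Real.sqrt k : ℂ) := by
    rw [star_div₀]
    congr 1
    · rw [Complex.star_def, ← Complex.exp_conj]
      simp only [hz, map_div₀, _root_.map_mul, Complex.conj_I, Complex.conj_ofReal, map_ofNat,
        map_natCast, neg_div]
      ring
    · rw [Complex.star_def, Complex.conj_ofReal]
  rw [hstar, div_mul_div_comm, ← Complex.exp_add, add_neg_cancel, Complex.exp_zero, hsq, one_div]

lemma fourier_mul_conjTranspose (k : ℕ) (hk : k ≠ 0) :
    FourierMatrix k * (FourierMatrix k)ᴴ = 1 := by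
  have hk' : (k : ℂ) ≠ 0 := Nat.cast_ne_zero.mpr hk
  set ξ : ℂ := Complex.exp (2 * Real.pi * Complex.I / k) with hξ
  have hprim : IsPrimitiveRoot ξ k := Complex.isPrimitiveRoot_exp k hk
  have hξ0 : ξ ≠ 0 := Complex.exp_ne_zero _
  have hsq : (Real.sqrt k : ℂ) * (Real.sqrt k : ℂ) = (k : ℂ) := by
    rw [← Complex.ofReal_mul, Real.mul_self_sqrt (Nat.cast_nonneg k)]; simp
  have hconj : star ξ = ξ⁻¹ := by
    apply eq_inv_of_mul_eq_one_left
    rw [Complex.star_def, ← Complex.exp_conj, ← Complex.exp_add]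
    have : (starRingEnd ℂ) (2 * Real.pi * Complex.I / k) = -(2 * Real.pi * Complex.I / k) := by
      simp only [map_div₀, _root_.map_mul, Complex.conj_I, Complex.conj_ofReal, map_ofNat,
        map_natCast, neg_div]
      ring
    rw [this, neg_add_cancel, Complex.exp_zero]
  ext j l
  rw [Matrix.mul_apply]
  have hterm : ∀ q : Fin k, FourierMatrix k j q * (FourierMatrix k)ᴴ q l
      = (ξ ^ ((j : ℤ) - (l : ℤ))) ^ (q : ℕ) * (k : ℂ)⁻¹ := by
    intro q
    rw [Matrix.conjTranspose_apply, FourierMatrix_apply k hk, FourierMatrix_apply k hk,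
      star_div₀, ← hξ]
    rw [show star (ξ ^ ((l : ℕ) * (q : ℕ))) = (ξ⁻¹) ^ ((l : ℕ) * (q : ℕ)) by
      rw [← hconj, star_pow]]
    rw [show star ((Real.sqrt k : ℂ)) = (Real.sqrt k : ℂ) by
      rw [Complex.star_def, Complex.conj_ofReal]]
    rw [div_mul_div_comm, hsq]
    congr 1
    rw [← zpow_natCast ξ ((j : ℕ) * (q : ℕ)), ← zpow_natCast ξ⁻¹ ((l : ℕ) * (q : ℕ)),
      _root_.inv_zpow, ← _root_.zpow_neg, ← zpow_add₀ hξ0,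
      ← zpow_natCast (ξ ^ ((j : ℤ) - (l : ℤ))) (q : ℕ), ← _root_.zpow_mul]
    congr 1
    push_cast
    ring
  rw [Finset.sum_congr rfl fun q _ => hterm q, ← Finset.sum_mul]
  rcases eq_or_ne j l with rfl | hjl
  · simp only [sub_self, zpow_zero, one_pow]
    rw [Finset.sum_const, Finset.card_univ, Fintype.card_fin, nsmul_eq_mul, mul_one,
      mul_inv_cancel₀ hk', Matrix.one_apply_eq]
  · have hη1 : ξ ^ ((j : ℤ) - (l : ℤ)) ≠ 1 := by
      intro h
      rw [hprim.zpow_eq_one_iff_dvd] at h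
      have hj := j.isLt
      have hl := l.isLt
      have hlt : |(j : ℤ) - (l : ℤ)| < (k : ℤ) := by
        rw [abs_sub_lt_iff]; constructor <;> omega
      have h0 := Int.eq_zero_of_abs_lt_dvd h hlt
      exact hjl (Fin.ext (by omega))
    have hηk : (ξ ^ ((j : ℤ) - (l : ℤ))) ^ k = 1 := by
      rw [← zpow_natCast (ξ ^ ((j : ℤ) - (l : ℤ))) k, ← _root_.zpow_mul, mul_comm,
        _root_.zpow_mul, zpow_natCast, hprim.pow_eq_one, _root_.one_zpow]
    rw [show (∑ q : Fin k, (ξ ^ ((j : ℤ) - (l : ℤ))) ^ (q : ℕ)) =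
        ∑ q ∈ Finset.range k, (ξ ^ ((j : ℤ) - (l : ℤ))) ^ q from
      Fin.sum_univ_eq_sum_range _ k]
    rw [geom_sum_eq hη1, hηk, sub_self, zero_div, zero_mul]
    exact (Matrix.one_apply_ne hjl).symm

lemma one_kronecker_diagonal {a b : ℕ} (v : Fin b → ℂ) :
    (1 : Matrix (Fin a) (Fin a) ℂ) ⊗ₖ Matrix.diagonal v
      = Matrix.diagonal (fun p : Fin a × Fin b => v p.2) := by
  rw [← Matrix.diagonal_one, Matrix.diagonal_kronecker_diagonal]
  simp

lemma one_kronecker_conjTranspose {a b : ℕ} (A : Matrix (Fin b) (Fin b) ℂ) :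
    ((1 : Matrix (Fin a) (Fin a) ℂ) ⊗ₖ A)ᴴ = 1 ⊗ₖ Aᴴ := by
  ext ⟨x, y⟩ ⟨p, q⟩
  simp only [Matrix.conjTranspose_apply, Matrix.kroneckerMap_apply, star_mul',
    Matrix.one_apply]
  by_cases h : x = p
  · subst h; simp
  · simp [h, Ne.symm h]

lemma diagonal_zpow {ι : Type*} [Fintype ι] [DecidableEq ι] (v : ι → ℂ)
    (hv : ∀ i, v i ≠ 0) (r : ℤ) :
    Matrix.diagonal v ^ r = Matrix.diagonal (fun i => v i ^ r) := by
  cases r with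
  | ofNat k =>
      have h1 : (fun i => v i ^ (Int.ofNat k)) = fun i => v i ^ k := by
        funext i; rw [Int.ofNat_eq_coe, zpow_natCast]
      rw [h1, Int.ofNat_eq_coe, zpow_natCast, Matrix.diagonal_pow]
      rfl
  | negSucc k =>
      rw [zpow_negSucc, Matrix.diagonal_pow]
      refine Matrix.inv_eq_left_inv ?_
      rw [Matrix.diagonal_mul_diagonal]
      ext i j
      rcases eq_or_ne i j with rfl | hij
      · rw [Matrix.diagonal_apply_eq, Matrix.one_apply_eq]
        simp only [Pi.pow_apply, zpow_negSucc]
        exact inv_mul_cancel₀ (pow_ne_zero _ (hv i))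
      · rw [Matrix.diagonal_apply_ne _ hij, Matrix.one_apply_ne hij]

lemma conj_diag_zpow {ι : Type*} [Fintype ι] [DecidableEq ι] (P : Matrix ι ι ℂ)
    (hP : P * Pᴴ = 1) (v : ι → ℂ) (hv : ∀ i, v i ≠ 0) (r : ℤ) :
    (P * Matrix.diagonal v * Pᴴ) ^ r = P * Matrix.diagonal (fun i => v i ^ r) * Pᴴ := by
  have hP' : Pᴴ * P = 1 := mul_eq_one_comm.mp hP
  have key : ∀ (f g : ι → ℂ),
      (P * Matrix.diagonal f * Pᴴ) * (P * Matrix.diagonal g * Pᴴ)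
        = P * Matrix.diagonal (fun i => f i * g i) * Pᴴ := by
    intro f g
    calc (P * Matrix.diagonal f * Pᴴ) * (P * Matrix.diagonal g * Pᴴ)
        = P * Matrix.diagonal f * (Pᴴ * P * (Matrix.diagonal g * Pᴴ)) := by
          simp only [Matrix.mul_assoc]
      _ = P * Matrix.diagonal f * Matrix.diagonal g * Pᴴ := by
          rw [hP', Matrix.one_mul, ← Matrix.mul_assoc]
      _ = P * Matrix.diagonal (fun i => f i * g i) * Pᴴ := by
          rw [Matrix.mul_assoc P, Matrix.diagonal_mul_diagonal]
  have keypow : ∀ (k : ℕ),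
      (P * Matrix.diagonal v * Pᴴ) ^ k = P * Matrix.diagonal (fun i => v i ^ k) * Pᴴ := by
    intro k
    induction k with
    | zero =>
        simp only [pow_zero]
        rw [Matrix.diagonal_one, Matrix.mul_one, hP]
    | succ k ih =>
        have h1 : (fun i => v i ^ k * v i) = fun i => v i ^ (k + 1) := by
          funext i; rw [← pow_succ]
        rw [pow_succ, ih,
          show (P * Matrix.diagonal v * Pᴴ) = P * Matrix.diagonal (fun i => v i) * Pᴴ from rfl,
          key, h1]
  cases r with
  | ofNat k =>
      have h1 : (fun i => v i ^ (Int.ofNat k)) = fun i => v i ^ k := by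
        funext i; rw [Int.ofNat_eq_coe, zpow_natCast]
      rw [h1, Int.ofNat_eq_coe, zpow_natCast, keypow]
  | negSucc k =>
      have h1 : (fun i => v i ^ Int.negSucc k) = fun i => (v i ^ (k + 1))⁻¹ := by
        funext i; rw [zpow_negSucc]
      rw [zpow_negSucc, keypow, h1]
      refine Matrix.inv_eq_left_inv ?_
      rw [key]
      have h2 : (fun i => (v i ^ (k + 1))⁻¹ * v i ^ (k + 1)) = fun _ : ι => (1 : ℂ) := by
        funext i
        exact inv_mul_cancel₀ (pow_ne_zero _ (hv i))
      rw [h2, Matrix.diagonal_one, Matrix.mul_one, hP]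

lemma sum_range_mul_decomp (f : ℕ → ℂ) (a b : ℕ) :
    ∑ t ∈ Finset.range (a * b), f t = ∑ y ∈ Finset.range a, ∑ q ∈ Finset.range b, f (y * b + q) := by
  induction a with
  | zero => simp
  | succ a ih =>
      rw [Nat.succ_mul, Finset.sum_range_add, ih, Finset.sum_range_succ]

lemma blockKron_conj {m : ℕ} {n : Fin m → ℕ} (F : ∀ i, Matrix (Fin (n i)) (Fin (n i)) ℂ)
    (v : ∀ i, Fin (n i) → ℂ) :
    Matrix.blockDiagonal' (fun i => (1 : Matrix (Fin (n i)) (Fin (n i)) ℂ) ⊗ₖ F i) *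
        Matrix.diagonal (fun a : (i : Fin m) × (Fin (n i) × Fin (n i)) => v a.1 a.2.2) *
        (Matrix.blockDiagonal' (fun i => (1 : Matrix (Fin (n i)) (Fin (n i)) ℂ) ⊗ₖ F i))ᴴ
      = Matrix.blockDiagonal'
          (fun i => (1 : Matrix (Fin (n i)) (Fin (n i)) ℂ)
            ⊗ₖ (F i * Matrix.diagonal (v i) * (F i)ᴴ)) := by
  have hdiag : Matrix.diagonal (fun a : (i : Fin m) × (Fin (n i) × Fin (n i)) => v a.1 a.2.2)
      = Matrix.blockDiagonal'
          (fun i => (1 : Matrix (Fin (n i)) (Fin (n i)) ℂ) ⊗ₖ Matrix.diagonal (v i)) := by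
    rw [show (fun i => (1 : Matrix (Fin (n i)) (Fin (n i)) ℂ) ⊗ₖ Matrix.diagonal (v i))
        = fun i => Matrix.diagonal (fun p : Fin (n i) × Fin (n i) => v i p.2) from
      funext fun i => one_kronecker_diagonal (v i), Matrix.blockDiagonal'_diagonal]
  rw [hdiag, Matrix.blockDiagonal'_conjTranspose, ← Matrix.blockDiagonal'_mul,
    ← Matrix.blockDiagonal'_mul]
  refine congrArg _ (funext fun i => ?_)
  rw [one_kronecker_conjTranspose, ← Matrix.mul_kronecker_mul, ← Matrix.mul_kronecker_mul,
    Matrix.one_mul, Matrix.one_mul]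

lemma blockKron_unitary {m : ℕ} {n : Fin m → ℕ} (F : ∀ i, Matrix (Fin (n i)) (Fin (n i)) ℂ)
    (hF : ∀ i, F i * (F i)ᴴ = 1) :
    Matrix.blockDiagonal' (fun i => (1 : Matrix (Fin (n i)) (Fin (n i)) ℂ) ⊗ₖ F i) *
        (Matrix.blockDiagonal' (fun i => (1 : Matrix (Fin (n i)) (Fin (n i)) ℂ) ⊗ₖ F i))ᴴ
      = 1 := by
  rw [Matrix.blockDiagonal'_conjTranspose, ← Matrix.blockDiagonal'_mul]
  rw [show (fun i => ((1 : Matrix (Fin (n i)) (Fin (n i)) ℂ) ⊗ₖ F i)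
        * ((1 : Matrix (Fin (n i)) (Fin (n i)) ℂ) ⊗ₖ F i)ᴴ)
      = fun i => (1 : Matrix ((Fin (n i)) × (Fin (n i))) ((Fin (n i)) × (Fin (n i))) ℂ) from ?_]
  · exact Matrix.blockDiagonal'_one
  funext i
  rw [one_kronecker_conjTranspose, ← Matrix.mul_kronecker_mul, Matrix.one_mul, hF i,
    Matrix.one_kronecker_one]

/-- With `d = Σ nᵢ²`, `sᵢ = Σ_{j<i} nⱼ²`, `ω = exp(2πi/d)`,
`U = ⊕ᵢ ω^{sᵢ} Iₙᵢ ⊗ Dᵢ` where `Dᵢ = diag(1, ω^{nᵢ}, …, ω^{(nᵢ-1)nᵢ})`, and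
`V = ⊕ᵢ Iₙᵢ ⊗ Cᵢ` where `Cᵢ = Fₙᵢ diag(1, ω, …, ω^{nᵢ-1}) Fₙᵢ*` is a circulant
unitary, one has `tr(U^r V^r) = 0` for every integer `r` not divisible by `d`. -/
theorem trace_UrVr_eq_zero (m : ℕ) (n : Fin m → ℕ) (hn : ∀ i, 0 < n i)
    (d : ℕ) (hd : d = ∑ i, n i ^ 2)
    (s : Fin m → ℕ) (hs : ∀ i, s i = ∑ j ∈ Finset.univ.filter (· < i), n j ^ 2)
    (ω : ℂ) (hω : ω = Complex.exp (2 * Real.pi * Complex.I / d))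
    (D : ∀ i, Matrix (Fin (n i)) (Fin (n i)) ℂ)
    (hD : ∀ i, D i = Matrix.diagonal fun x : Fin (n i) => ω ^ ((x : ℕ) * n i))
    (C : ∀ i, Matrix (Fin (n i)) (Fin (n i)) ℂ)
    (hC : ∀ i, C i = FourierMatrix (n i) *
        (Matrix.diagonal fun x : Fin (n i) => ω ^ (x : ℕ)) * (FourierMatrix (n i))ᴴ)
    (U V : Matrix ((i : Fin m) × (Fin (n i) × Fin (n i)))
        ((i : Fin m) × (Fin (n i) × Fin (n i))) ℂ)
    (hU : U = Matrix.blockDiagonal'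
        fun i => (ω ^ s i) • ((1 : Matrix (Fin (n i)) (Fin (n i)) ℂ) ⊗ₖ D i))
    (hV : V = Matrix.blockDiagonal'
        fun i => (1 : Matrix (Fin (n i)) (Fin (n i)) ℂ) ⊗ₖ C i)
    (r : ℤ) (hr : ¬ (d : ℤ) ∣ r) :
    Matrix.trace (U ^ r * V ^ r) = 0 := by
  classical
  -- dispose of the degenerate case `d = 0` (then `Fin m` is empty)
  rcases Nat.eq_zero_or_pos d with hd0 | hdpos
  · have hm : IsEmpty (Fin m) := by
      rw [← not_nonempty_iff]
      rintro ⟨i⟩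
      have h1 : n i ^ 2 ≤ d := hd ▸ Finset.single_le_sum
        (f := fun j => n j ^ 2) (fun _ _ => Nat.zero_le _) (Finset.mem_univ i)
      have h2 := hn i
      have h3 : 0 < n i ^ 2 := pow_pos h2 2
      omega
    have hEmpty : IsEmpty ((i : Fin m) × (Fin (n i) × Fin (n i))) := by
      constructor; rintro ⟨i, _⟩; exact hm.false i
    rw [Matrix.trace]
    rw [Finset.univ_eq_empty, Finset.sum_empty]
  -- main case
  have hdne : d ≠ 0 := hdpos.ne'
  have hdC : (d : ℂ) ≠ 0 := Nat.cast_ne_zero.mpr hdne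
  have hprim : IsPrimitiveRoot ω d := hω ▸ Complex.isPrimitiveRoot_exp d hdne
  have hω0 : ω ≠ 0 := hω ▸ Complex.exp_ne_zero _
  set ζ : ℂ := ω ^ r with hζ
  have hζ1 : ζ ≠ 1 := fun h => hr ((hprim.zpow_eq_one_iff_dvd r).mp h)
  have hζd : ζ ^ d = 1 := by
    rw [hζ, ← zpow_natCast (ω ^ r) d, ← _root_.zpow_mul, mul_comm, _root_.zpow_mul,
      zpow_natCast, hprim.pow_eq_one, _root_.one_zpow]
  have hpow : ∀ e : ℕ, (ω ^ e) ^ r = ζ ^ e := by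
    intro e
    rw [← zpow_natCast ω e, ← _root_.zpow_mul, mul_comm, _root_.zpow_mul, zpow_natCast]
  -- `U` is diagonal
  have hU' : U = Matrix.diagonal
      (fun a : (i : Fin m) × (Fin (n i) × Fin (n i)) => ω ^ (s a.1 + (a.2.2 : ℕ) * n a.1)) := by
    rw [hU]
    rw [show (fun i => (ω ^ s i) • ((1 : Matrix (Fin (n i)) (Fin (n i)) ℂ) ⊗ₖ D i))
        = fun i => Matrix.diagonal
            (fun p : Fin (n i) × Fin (n i) => ω ^ (s i + (p.2 : ℕ) * n i)) from ?_,
      Matrix.blockDiagonal'_diagonal]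
    funext i
    rw [hD i, one_kronecker_diagonal, ← Matrix.diagonal_smul]
    have hfun : (ω ^ s i) • (fun p : Fin (n i) × Fin (n i) => ω ^ ((p.2 : ℕ) * n i))
        = fun p : Fin (n i) × Fin (n i) => ω ^ (s i + (p.2 : ℕ) * n i) := by
      funext p
      rw [Pi.smul_apply, smul_eq_mul, ← pow_add]
    rw [hfun]
  have hUr : U ^ r = Matrix.diagonal
      (fun a : (i : Fin m) × (Fin (n i) × Fin (n i)) =>
        (ω ^ (s a.1 + (a.2.2 : ℕ) * n a.1)) ^ r) := by
    rw [hU']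
    exact diagonal_zpow _ (fun a => pow_ne_zero _ hω0) r
  have hUr' : U ^ r = Matrix.blockDiagonal' (fun i => Matrix.diagonal
      (fun p : Fin (n i) × Fin (n i) => (ω ^ (s i + (p.2 : ℕ) * n i)) ^ r)) := by
    rw [hUr, Matrix.blockDiagonal'_diagonal]
  -- `V` is a unitary conjugate of a diagonal
  have hPU : Matrix.blockDiagonal'
        (fun i => (1 : Matrix (Fin (n i)) (Fin (n i)) ℂ) ⊗ₖ FourierMatrix (n i)) *
      (Matrix.blockDiagonal'
        (fun i => (1 : Matrix (Fin (n i)) (Fin (n i)) ℂ) ⊗ₖ FourierMatrix (n i)))ᴴ = 1 :=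
    blockKron_unitary _ (fun i => fourier_mul_conjTranspose (n i) (hn i).ne')
  have hconj1 := blockKron_conj (fun i => FourierMatrix (n i))
    (fun i (x : Fin (n i)) => ω ^ (x : ℕ))
  have hV' : V = Matrix.blockDiagonal'
        (fun i => (1 : Matrix (Fin (n i)) (Fin (n i)) ℂ) ⊗ₖ FourierMatrix (n i)) *
      Matrix.diagonal
        (fun a : (i : Fin m) × (Fin (n i) × Fin (n i)) => ω ^ ((a.2.2 : ℕ))) *
      (Matrix.blockDiagonal'
        (fun i => (1 : Matrix (Fin (n i)) (Fin (n i)) ℂ) ⊗ₖ FourierMatrix (n i)))ᴴ := by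
    rw [hV]
    refine Eq.trans ?_ hconj1.symm
    exact congrArg _ (funext fun i => by rw [hC i])
  have hVr : V ^ r = Matrix.blockDiagonal'
        (fun i => (1 : Matrix (Fin (n i)) (Fin (n i)) ℂ) ⊗ₖ FourierMatrix (n i)) *
      Matrix.diagonal
        (fun a : (i : Fin m) × (Fin (n i) × Fin (n i)) => (ω ^ ((a.2.2 : ℕ))) ^ r) *
      (Matrix.blockDiagonal'
        (fun i => (1 : Matrix (Fin (n i)) (Fin (n i)) ℂ) ⊗ₖ FourierMatrix (n i)))ᴴ := by
    rw [hV']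
    exact conj_diag_zpow _ hPU _ (fun a => pow_ne_zero _ hω0) r
  have hconj2 := blockKron_conj (fun i => FourierMatrix (n i))
    (fun i (x : Fin (n i)) => (ω ^ (x : ℕ)) ^ r)
  have hVr' : V ^ r = Matrix.blockDiagonal' (fun i =>
      (1 : Matrix (Fin (n i)) (Fin (n i)) ℂ) ⊗ₖ (FourierMatrix (n i) *
        Matrix.diagonal (fun x : Fin (n i) => (ω ^ (x : ℕ)) ^ r) * (FourierMatrix (n i))ᴴ)) := by
    rw [hVr]
    exact hconj2
  -- compute the trace blockwise
  rw [hUr', hVr', ← Matrix.blockDiagonal'_mul, Matrix.trace_blockDiagonal']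
  have block_eval : ∀ i : Fin m,
      Matrix.trace (Matrix.diagonal
          (fun p : Fin (n i) × Fin (n i) => (ω ^ (s i + (p.2 : ℕ) * n i)) ^ r) *
        ((1 : Matrix (Fin (n i)) (Fin (n i)) ℂ) ⊗ₖ (FourierMatrix (n i) *
          Matrix.diagonal (fun x : Fin (n i) => (ω ^ (x : ℕ)) ^ r) * (FourierMatrix (n i))ᴴ)))
      = ζ ^ s i * ∑ y : Fin (n i), ∑ q : Fin (n i), ζ ^ ((y : ℕ) * n i + (q : ℕ)) := by
    intro i
    have hkC : ((n i : ℂ)) ≠ 0 := Nat.cast_ne_zero.mpr (hn i).ne'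
    have hB : ∀ y : Fin (n i),
        (FourierMatrix (n i) * Matrix.diagonal (fun x : Fin (n i) => (ω ^ (x : ℕ)) ^ r) *
          (FourierMatrix (n i))ᴴ) y y
        = (n i : ℂ)⁻¹ * ∑ q : Fin (n i), ζ ^ (q : ℕ) := by
      intro y
      rw [Matrix.mul_apply, Finset.mul_sum]
      refine Finset.sum_congr rfl fun q _ => ?_
      rw [Matrix.mul_diagonal, Matrix.conjTranspose_apply, mul_right_comm,
        fourier_entry_mul_star (n i) (hn i).ne', hpow]
    have htr : Matrix.trace (Matrix.diagonal
          (fun p : Fin (n i) × Fin (n i) => (ω ^ (s i + (p.2 : ℕ) * n i)) ^ r) *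
        ((1 : Matrix (Fin (n i)) (Fin (n i)) ℂ) ⊗ₖ (FourierMatrix (n i) *
          Matrix.diagonal (fun x : Fin (n i) => (ω ^ (x : ℕ)) ^ r) * (FourierMatrix (n i))ᴴ)))
        = ∑ p : Fin (n i) × Fin (n i),
            ζ ^ (s i + (p.2 : ℕ) * n i) *
              ((n i : ℂ)⁻¹ * ∑ q : Fin (n i), ζ ^ (q : ℕ)) := by
      rw [Matrix.trace]
      refine Finset.sum_congr rfl fun p _ => ?_
      rw [Matrix.diag_apply, Matrix.diagonal_mul, Matrix.kroneckerMap_apply,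
        Matrix.one_apply_eq, one_mul, hB p.2, hpow]
    rw [htr, Fintype.sum_prod_type]
    dsimp only
    rw [Finset.sum_const, Finset.card_univ, Fintype.card_fin, nsmul_eq_mul]
    have expand : ∀ y : Fin (n i),
        ζ ^ (s i + (y : ℕ) * n i) * ((n i : ℂ)⁻¹ * ∑ q : Fin (n i), ζ ^ (q : ℕ))
          = (n i : ℂ)⁻¹ * (ζ ^ s i * (ζ ^ ((y : ℕ) * n i) *
              ∑ q : Fin (n i), ζ ^ (q : ℕ))) := by
      intro y
      rw [pow_add]
      ring
    rw [Finset.sum_congr rfl fun y _ => expand y]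
    rw [← Finset.mul_sum, ← mul_assoc, mul_inv_cancel₀ hkC, one_mul, ← Finset.mul_sum]
    congr 1
    refine Finset.sum_congr rfl fun y _ => ?_
    rw [Finset.mul_sum]
    refine Finset.sum_congr rfl fun q _ => ?_
    rw [← pow_add]
  rw [Finset.sum_congr rfl fun i _ => block_eval i]
  -- turn the double sums into geometric sums
  have hinner : ∀ i : Fin m,
      (∑ y : Fin (n i), ∑ q : Fin (n i), ζ ^ ((y : ℕ) * n i + (q : ℕ)))
        = ∑ t ∈ Finset.range (n i * n i), ζ ^ t := by
    intro i
    rw [sum_range_mul_decomp (fun t => ζ ^ t) (n i) (n i)]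
    rw [Fin.sum_univ_eq_sum_range
      (fun y => ∑ q : Fin (n i), ζ ^ (y * n i + (q : ℕ))) (n i)]
    refine Finset.sum_congr rfl fun y _ => ?_
    exact Fin.sum_univ_eq_sum_range (fun q => ζ ^ (y * n i + q)) (n i)
  have hζne : ζ - 1 ≠ 0 := sub_ne_zero.mpr hζ1
  have hterm : ∀ i : Fin m,
      ζ ^ s i * ∑ y : Fin (n i), ∑ q : Fin (n i), ζ ^ ((y : ℕ) * n i + (q : ℕ))
        = (ζ ^ (s i + n i ^ 2) - ζ ^ s i) / (ζ - 1) := by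
    intro i
    rw [hinner i, geom_sum_eq hζ1, mul_div_assoc']
    congr 1
    rw [mul_sub, mul_one, ← pow_add, ← pow_two (n i)]
  rw [Finset.sum_congr rfl fun i _ => hterm i, ← Finset.sum_div]
  -- telescoping sum
  have key : ∑ i : Fin m, (ζ ^ (s i + n i ^ 2) - ζ ^ s i) = 0 := by
    set g : ℕ → ℂ := fun t =>
      ζ ^ (∑ j ∈ Finset.univ.filter (fun j : Fin m => (j : ℕ) < t), n j ^ 2) with hg
    have hgs : ∀ i : Fin m, g (i : ℕ) = ζ ^ s i := by
      intro i
      rw [hs i, hg]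
      congr 2
    have hgsucc : ∀ i : Fin m, g ((i : ℕ) + 1) = ζ ^ (s i + n i ^ 2) := by
      intro i
      have hfil : Finset.univ.filter (fun j : Fin m => (j : ℕ) < (i : ℕ) + 1)
          = insert i (Finset.univ.filter (fun j : Fin m => (j : ℕ) < (i : ℕ))) := by
        ext j
        simp [Nat.lt_succ_iff_lt_or_eq, Fin.ext_iff, or_comm, le_iff_eq_or_lt]
      have hnotmem : i ∉ Finset.univ.filter (fun j : Fin m => (j : ℕ) < (i : ℕ)) := by
        simp
      rw [hg]
      simp only []
      rw [hfil, Finset.sum_insert hnotmem, hs i]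
      congr 1
      rw [add_comm]
      congr 1
    have hg0 : g 0 = 1 := by
      rw [hg]
      simp
    have hgm : g m = 1 := by
      have : Finset.univ.filter (fun j : Fin m => (j : ℕ) < m) = Finset.univ := by
        refine Finset.filter_true_of_mem fun j _ => j.isLt
      rw [hg]
      simp only [this, ← hd, hζd]
    have step : ∀ i : Fin m, ζ ^ (s i + n i ^ 2) - ζ ^ s i = g ((i : ℕ) + 1) - g (i : ℕ) := by
      intro i
      rw [hgs i, hgsucc i]
    rw [Finset.sum_congr rfl fun i _ => step i]
    rw [Fin.sum_univ_eq_sum_range (fun t => g (t + 1) - g t) m, Finset.sum_range_sub g m,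
      hgm, hg0, sub_self]
  rw [key, zero_div]
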